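/- arXiv:1810.01699 — 3 statements merged into one kernel-verified Lean document; each statement's English description precedes it below -/
import Mathlib

section
/- (Lemma 3.8(ii), parabolic parameter in the anti-ferromagnetic regime) Let d ≥ 2 be an integer and let b ∈ (1, (d+1)/(d−1)). Then there exists a unique θ ∈ (0,π) such that for ξ = e^{iθ} the map f_{ξ,b} has a fixed point R ∈ ∂𝔻 with |f'_{ξ,b}(R)| = 1; moreover, for this θ and ξ = e^{iθ}, any fixed point R ∈ ∂𝔻 of f_{ξ,b} with |f'_{ξ,b}(R)| = 1 satisfies f'_{ξ,b}(R) = −1 and is a solution of the quadratic equation R² + ((d(1−b²)+(1+b²))/b)·R + 1 = 0. The same θ works for ξ = e^{−iθ}, with the fixed point replaced by its complex conjugate. -/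
/-- The rational map `f_{ξ,b}(R) = ξ·((R+b)/(bR+1))^d` associated to the Ising model. -/
noncomputable def fIsing (d : ℕ) (ξ b R : ℂ) : ℂ := ξ * ((R + b) / (b * R + 1)) ^ d

open Complex Set

lemma bR_ne (b : ℝ) (hb : 1 < b) (R : ℂ) (hR : ‖R‖ = 1) : (b : ℂ) * R + 1 ≠ 0 := by
  intro h
  have h2 : (b : ℂ) * R = -1 := by linear_combination h
  have h1 : ‖(b : ℂ) * R‖ = b := by
    rw [norm_mul, hR, Complex.norm_real, Real.norm_of_nonneg (by linarith), mul_one]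
  rw [h2] at h1; simp at h1; linarith

lemma Rb_ne (b : ℝ) (hb : 1 < b) (R : ℂ) (hR : ‖R‖ = 1) : R + (b : ℂ) ≠ 0 := by
  intro h
  have h2 : R = -(b : ℂ) := by linear_combination h
  rw [h2, norm_neg, Complex.norm_real, Real.norm_of_nonneg (by linarith)] at hR
  linarith

lemma abs_bR_eq (b : ℝ) (R : ℂ) (hR : ‖R‖ = 1) :
    ‖(b : ℂ) * R + 1‖ = ‖R + (b : ℂ)‖ := by
  have h1 : R * (starRingEnd ℂ) R = 1 := by
    rw [Complex.mul_conj]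
    norm_cast
    rw [← Complex.sq_norm, hR]; norm_num
  have h : (b : ℂ) * R + 1 = R * ((starRingEnd ℂ) (R + (b : ℂ))) := by
    rw [map_add, Complex.conj_ofReal, mul_add, h1]; ring
  rw [h, norm_mul, hR, one_mul, Complex.norm_conj]

lemma fIsing_deriv (d : ℕ) (ξ b z : ℂ) (h : b * z + 1 ≠ 0) :
    deriv (fIsing d ξ b) z
      = ξ * d * ((z + b) / (b * z + 1)) ^ (d - 1) * ((1 - b ^ 2) / (b * z + 1) ^ 2) := by
  have h1 : HasDerivAt (fun R : ℂ => (R + b) / (b * R + 1)) ((1 - b ^ 2) / (b * z + 1) ^ 2) z := by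
    have := (((hasDerivAt_id z).add_const b).div
      (((hasDerivAt_id z).const_mul b).add_const 1) h)
    refine this.congr_deriv ?_
    simp only [id]
    ring
  have h2 := (h1.pow d).const_mul ξ
  have h3 : fIsing d ξ b = fun R : ℂ => ξ * ((R + b) / (b * R + 1)) ^ d := rfl
  rw [h3, show deriv (fun R : ℂ => ξ * ((R + b) / (b * R + 1)) ^ d) z = _ from h2.deriv]
  ring

lemma fIsing_conj (d : ℕ) (ξ z : ℂ) (b : ℝ) :
    fIsing d ((starRingEnd ℂ) ξ) (b : ℂ) ((starRingEnd ℂ) z)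
      = (starRingEnd ℂ) (fIsing d ξ (b : ℂ) z) := by
  simp [fIsing, map_mul, map_pow, map_div₀, map_add, map_one, Complex.conj_ofReal]

lemma arg_exp_eq (t : ℝ) (ht : t ∈ Set.Ioc (-Real.pi) Real.pi) :
    (Complex.exp ((t : ℂ) * Complex.I)).arg = t := by
  rw [Complex.exp_mul_I]
  exact Complex.arg_cos_add_sin_mul_I ht

open Complex Set

lemma deriv_eq_neg_one (e : ℕ) (b : ℝ) (hb : 1 < b) (ξ R : ℂ) (hR : ‖R‖ = 1)
    (hre : 2 * b * R.re = ((e : ℝ) + 2) * (b ^ 2 - 1) - (b ^ 2 + 1))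
    (hfix : fIsing (e + 2) ξ (b : ℂ) R = R) :
    deriv (fIsing (e + 2) ξ (b : ℂ)) R = -1 := by
  have hbR := bR_ne b hb R hR
  have hRb := Rb_ne b hb R hR
  have h1 : R * (starRingEnd ℂ) R = 1 := by
    rw [Complex.mul_conj]; norm_cast; rw [← Complex.sq_norm, hR]; norm_num
  have h2 : R + (starRingEnd ℂ) R = 2 * (R.re : ℂ) := by
    rw [Complex.add_conj]; push_cast; ring
  have hR2 : R ^ 2 = 2 * (R.re : ℂ) * R - 1 := by linear_combination R * h2 - h1
  have hreC : 2 * (b : ℂ) * (R.re : ℂ) = ((e : ℂ) + 2) * ((b : ℂ) ^ 2 - 1) - ((b : ℂ) ^ 2 + 1) := by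
    exact_mod_cast congrArg (Complex.ofReal) hre
  have h5 : (R + (b : ℂ)) * ((b : ℂ) * R + 1) = ((e : ℂ) + 2) * ((b : ℂ) ^ 2 - 1) * R := by
    linear_combination (b : ℂ) * hR2 + R * hreC
  have hfix' : ξ * (R + (b : ℂ)) ^ (e + 2) = R * ((b : ℂ) * R + 1) ^ (e + 2) := by
    have h := hfix
    rw [fIsing, div_pow, ← mul_div_assoc, div_eq_iff (pow_ne_zero _ hbR)] at h
    linear_combination h
  have T' : (ξ * ((e : ℂ) + 2) * (R + (b : ℂ)) ^ (e + 1) * (1 - (b : ℂ) ^ 2)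
      + ((b : ℂ) * R + 1) ^ (e + 3)) * (R + (b : ℂ)) = 0 := by
    linear_combination (((e : ℂ) + 2) * (1 - (b : ℂ) ^ 2)) * hfix'
      + ((b : ℂ) * R + 1) ^ (e + 2) * h5
  have T : ξ * ((e : ℂ) + 2) * (R + (b : ℂ)) ^ (e + 1) * (1 - (b : ℂ) ^ 2)
      = -((b : ℂ) * R + 1) ^ (e + 3) := by
    have := (mul_eq_zero.mp T').resolve_right hRb
    linear_combination this
  rw [fIsing_deriv _ _ _ _ hbR]
  rw [show e + 2 - 1 = e + 1 by omega, div_pow, mul_assoc, div_mul_div_comm,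
    ← mul_div_assoc, div_eq_iff (mul_ne_zero (pow_ne_zero _ hbR) (pow_ne_zero _ hbR))]
  push_cast
  linear_combination T

lemma normSq_bR (b : ℝ) (R : ℂ) (hR : ‖R‖ = 1) :
    (‖(b : ℂ) * R + 1‖) ^ 2 = b ^ 2 + 2 * b * R.re + 1 := by
  have hn : R.re * R.re + R.im * R.im = 1 := by
    rw [← Complex.normSq_apply, ← Complex.sq_norm, hR]; norm_num
  rw [Complex.sq_norm, Complex.normSq_apply]
  simp only [Complex.add_re, Complex.add_im, Complex.mul_re, Complex.mul_im,
    Complex.ofReal_re, Complex.ofReal_im, Complex.one_re, Complex.one_im]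
  nlinarith [hn]

lemma re_eq (e : ℕ) (b : ℝ) (hb : 1 < b) (ξ R : ℂ) (hξ : ‖ξ‖ = 1)
    (hR : ‖R‖ = 1)
    (hder : ‖deriv (fIsing (e + 2) ξ (b : ℂ)) R‖ = 1) :
    2 * b * R.re = ((e : ℝ) + 2) * (b ^ 2 - 1) - (b ^ 2 + 1) := by
  have hbR := bR_ne b hb R hR
  have hA0 : ‖(b : ℂ) * R + 1‖ ≠ 0 := by
    simpa using hbR
  rw [fIsing_deriv _ _ _ _ hbR] at hder
  have hb2 : (1 : ℂ) - (b : ℂ) ^ 2 = ((1 - b ^ 2 : ℝ) : ℂ) := by push_cast; ring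
  rw [norm_mul, norm_mul, norm_mul, norm_pow, norm_div, norm_div, abs_bR_eq b R hR, hξ,
    div_self (by rwa [← abs_bR_eq b R hR]), one_pow, one_mul, mul_one,
    hb2, Complex.norm_real, norm_pow, Real.norm_eq_abs, abs_of_nonpos (by nlinarith),
    Complex.norm_natCast] at hder
  have hA2 := normSq_bR b R hR
  have hAp : (0 : ℝ) < ‖(b : ℂ) * R + 1‖ ^ 2 := by positivity
  have hkey : ((e : ℝ) + 2) * (b ^ 2 - 1) = ‖(b : ℂ) * R + 1‖ ^ 2 := by
    push_cast at hder
    field_simp at hder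
    nlinarith [hder]
  rw [hA2] at hkey
  linarith

set_option maxHeartbeats 1000000 in
/-- Lemma 3.8(ii): for `b ∈ (1, (d+1)/(d-1))` there is a unique `θ ∈ (0,π)` for which
`f_{e^{iθ},b}` has a fixed point on the unit circle whose derivative has modulus 1;
any such fixed point has derivative exactly -1 and satisfies the stated quadratic
equation, and the same `θ` works for `e^{-iθ}` with the conjugate fixed point. -/
theorem fIsing_parabolic_parameter_antiferro (d : ℕ) (hd : 2 ≤ d) (b : ℝ)
    (hb₁ : 1 < b) (hb₂ : b < ((d : ℝ) + 1) / ((d : ℝ) - 1)) :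
    ∃ θ : ℝ, θ ∈ Set.Ioo 0 Real.pi ∧
      (∃ R : ℂ, ‖R‖ = 1 ∧
        fIsing d (Complex.exp (θ * Complex.I)) (b : ℂ) R = R ∧
        ‖deriv (fIsing d (Complex.exp (θ * Complex.I)) (b : ℂ)) R‖ = 1) ∧
      (∀ θ' ∈ Set.Ioo 0 Real.pi,
        (∃ R : ℂ, ‖R‖ = 1 ∧
          fIsing d (Complex.exp (θ' * Complex.I)) (b : ℂ) R = R ∧
          ‖deriv (fIsing d (Complex.exp (θ' * Complex.I)) (b : ℂ)) R‖ = 1) →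
        θ' = θ) ∧
      (∀ R : ℂ, ‖R‖ = 1 →
        fIsing d (Complex.exp (θ * Complex.I)) (b : ℂ) R = R →
        ‖deriv (fIsing d (Complex.exp (θ * Complex.I)) (b : ℂ)) R‖ = 1 →
          deriv (fIsing d (Complex.exp (θ * Complex.I)) (b : ℂ)) R = -1 ∧
          R ^ 2 + (((d : ℂ) * (1 - (b : ℂ) ^ 2) + (1 + (b : ℂ) ^ 2)) / (b : ℂ)) * R + 1 = 0 ∧
          fIsing d (Complex.exp (-(θ * Complex.I))) (b : ℂ) (starRingEnd ℂ R) =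
            starRingEnd ℂ R ∧
          ‖deriv (fIsing d (Complex.exp (-(θ * Complex.I))) (b : ℂ))
            (starRingEnd ℂ R)‖ = 1) := by
  obtain ⟨e, rfl⟩ : ∃ e, d = e + 2 := ⟨d - 2, by omega⟩
  have hb0 : (0:ℝ) < b := by linarith
  have hbb : (0:ℝ) < b ^ 2 - 1 := by nlinarith
  have hb₂' : b * ((e:ℝ) + 1) < (e:ℝ) + 3 := by
    push_cast at hb₂
    rw [lt_div_iff₀ (by linarith)] at hb₂
    linarith
  set c : ℝ := (((e:ℝ)+2) * (b^2-1) - (b^2+1)) / (2*b) with hcdef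
  have hc : 2 * b * c = ((e:ℝ)+2) * (b^2-1) - (b^2+1) := by
    rw [hcdef]; field_simp
  have hc2 : c < 1 := by
    rw [hcdef, div_lt_iff₀ (by linarith)]
    nlinarith [mul_pos (show (0:ℝ) < b + 1 by linarith)
      (show (0:ℝ) < ((e:ℝ)+3) - ((e:ℝ)+1)*b by linarith)]
  have hc1 : -1 < c := by
    rw [hcdef, lt_div_iff₀ (by linarith)]
    nlinarith [mul_pos (show (0:ℝ) < ((e:ℝ)+1)*b + ((e:ℝ)+3) by nlinarith)
      (show (0:ℝ) < b - 1 by linarith)]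
  set s : ℝ := Real.sqrt (1 - c^2) with hsdef
  have hs2 : s^2 = 1 - c^2 := Real.sq_sqrt (by nlinarith)
  have hs0 : 0 < s := Real.sqrt_pos.2 (by nlinarith)
  set φ : ℝ := Real.arccos c with hφdef
  have hφ0 : 0 < φ := Real.arccos_pos.2 hc2
  have hφπ : φ < Real.pi := by
    rcases lt_or_eq_of_le (Real.arccos_le_pi c) with h | h
    · exact h
    · exfalso; have := Real.arccos_eq_pi.mp h; linarith
  have hcosφ : Real.cos φ = c := Real.cos_arccos hc1.le hc2.le
  have hsinφ : Real.sin φ = s := by rw [hφdef, Real.sin_arccos]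
  set a : ℝ := b / ((e:ℝ)+3) with hadef
  have ha : 0 < a := by rw [hadef]; positivity
  have hab : b = a * ((e:ℝ)+3) := by rw [hadef]; field_simp
  have h2ac : 2*a*c = a^2*(((e:ℝ)+2)^2-1) - 1 := by
    rw [hadef, hcdef]; field_simp; ring
  have haD : 0 < a * ((e:ℝ)+2) := by positivity
  set p : ℝ := (c+a)/(a*((e:ℝ)+2)) with hpdef
  set q : ℝ := s/(a*((e:ℝ)+2)) with hqdef
  have hq0 : 0 < q := by rw [hqdef]; positivity
  have hpq : p^2 + q^2 = 1 := by
    rw [hpdef, hqdef]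
    field_simp
    linear_combination hs2 + h2ac
  have hpsq : p^2 < 1 := by nlinarith [hpq, hq0, sq_nonneg q]
  have hp2 : p < 1 := by nlinarith [hpsq, sq_nonneg (p-1)]
  have hp1 : -1 < p := by nlinarith [hpsq, sq_nonneg (p+1)]
  set χ : ℝ := Real.arccos p with hχdef
  have hχ0 : 0 < χ := Real.arccos_pos.2 hp2
  have hχπ : χ < Real.pi := by
    rcases lt_or_eq_of_le (Real.arccos_le_pi p) with h | h
    · exact h
    · exfalso; have := Real.arccos_eq_pi.mp h; linarith
  have hcosχ : Real.cos χ = p := Real.cos_arccos hp1.le hp2.le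
  have hsinχ : Real.sin χ = q := by
    rw [hχdef, Real.sin_arccos, show 1 - p^2 = q^2 by linarith, Real.sqrt_sq hq0.le]
  have h1ac : 0 < 1 + a*c := by nlinarith [h2ac, sq_nonneg a]
  have hcosδ : Real.cos (φ - χ) = (1 + a*c)/(a*((e:ℝ)+2)) := by
    rw [Real.cos_sub, hcosφ, hsinφ, hcosχ, hsinχ, hpdef, hqdef]
    field_simp
    linear_combination hs2
  have hsinδ : Real.sin (φ - χ) = s/((e:ℝ)+2) := by
    rw [Real.sin_sub, hcosφ, hsinφ, hcosχ, hsinχ, hpdef, hqdef]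
    field_simp
    ring
  have hδ0 : 0 < φ - χ := by
    by_contra hcon
    push_neg at hcon
    have h1 : 0 ≤ Real.sin (χ - φ) :=
      Real.sin_nonneg_of_nonneg_of_le_pi (by linarith) (by linarith)
    have h2 : Real.sin (φ - χ) = - Real.sin (χ - φ) := by
      rw [← Real.sin_neg]; ring_nf
    have h3 : 0 < s/((e:ℝ)+2) := by positivity
    rw [hsinδ] at h2
    linarith
  have hδh : φ - χ < Real.pi/2 := by
    by_contra hcon
    push_neg at hcon
    have h1 := Real.cos_nonpos_of_pi_div_two_le_of_le hcon (by linarith [Real.pi_pos])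
    rw [hcosδ] at h1
    have h4 : 0 < (1 + a*c)/(a*((e:ℝ)+2)) := by positivity
    linarith
  have hγ0 : 0 < Real.pi - φ := by linarith
  have hconc : Real.sin (Real.pi - φ) < ((e:ℝ)+2) * Real.sin ((Real.pi - φ)/((e:ℝ)+2)) := by
    have hw1 : (0:ℝ) < 1/((e:ℝ)+2) := by positivity
    have hw2 : (0:ℝ) < 1 - 1/((e:ℝ)+2) := by
      rw [sub_pos, div_lt_one (by positivity)]; linarith
    have h := strictConcaveOn_sin_Icc.2 (x := Real.pi - φ) (y := 0)
      ⟨by linarith, by linarith⟩ ⟨le_rfl, Real.pi_pos.le⟩ (by linarith)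
      hw1 hw2 (by ring)
    simp only [smul_eq_mul, mul_zero, add_zero, Real.sin_zero] at h
    rw [show (1/((e:ℝ)+2)) * (Real.pi - φ) = (Real.pi - φ)/((e:ℝ)+2) by ring] at h
    have h2 := mul_lt_mul_of_pos_left h (show (0:ℝ) < (e:ℝ)+2 by positivity)
    rw [← mul_assoc, mul_one_div_cancel (show ((e:ℝ)+2) ≠ 0 by positivity),
      one_mul] at h2
    linarith
  have hδγ : φ - χ < (Real.pi - φ)/((e:ℝ)+2) := by
    by_contra hcon
    push_neg at hcon
    have hmem1 : (Real.pi - φ)/((e:ℝ)+2) ∈ Set.Icc (-(Real.pi/2)) (Real.pi/2) := by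
      constructor
      · have : 0 ≤ (Real.pi - φ)/((e:ℝ)+2) := by positivity
        linarith [Real.pi_pos]
      · rw [div_le_iff₀ (by positivity)]
        have h6 : Real.pi/2 * ((e:ℝ)+2) = Real.pi + Real.pi/2 * (e:ℝ) := by ring
        have h7 : 0 ≤ Real.pi/2 * (e:ℝ) :=
          mul_nonneg (by positivity) (Nat.cast_nonneg e)
        linarith
    have hmem2 : φ - χ ∈ Set.Icc (-(Real.pi/2)) (Real.pi/2) :=
      ⟨by linarith [Real.pi_pos], by linarith⟩
    have hmono := Real.strictMonoOn_sin.monotoneOn hmem1 hmem2 hcon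
    rw [hsinδ] at hmono
    rw [Real.sin_pi_sub, hsinφ] at hconc
    have h5 := mul_le_mul_of_nonneg_left hmono (show (0:ℝ) ≤ (e:ℝ)+2 by positivity)
    have h6 : ((e:ℝ)+2)*(s/((e:ℝ)+2)) = s := by field_simp
    rw [h6] at h5
    linarith
  set θ : ℝ := φ + ((e:ℝ)+2) * (φ - χ) with hθdef
  have hθ0 : 0 < θ := by
    have := mul_pos (show (0:ℝ) < (e:ℝ)+2 by positivity) hδ0
    rw [hθdef]; linarith
  have hθπ : θ < Real.pi := by
    have h1 : ((e:ℝ)+2) * (φ - χ) < Real.pi - φ := by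
      have h2 := mul_lt_mul_of_pos_left hδγ (show (0:ℝ) < (e:ℝ)+2 by positivity)
      have h3 : ((e:ℝ)+2) * ((Real.pi-φ)/((e:ℝ)+2)) = Real.pi - φ := by field_simp
      rw [h3] at h2
      exact h2
    rw [hθdef]; linarith
  -- complex side
  set R : ℂ := (c:ℂ) + (s:ℂ)*Complex.I with hRdef
  have hRre : R.re = c := by simp [hRdef]
  have hRim : R.im = s := by simp [hRdef]
  have hnsR : Complex.normSq R = 1 := by
    rw [Complex.normSq_apply, hRre, hRim]; linear_combination hs2
  have hnR : ‖R‖ = 1 := by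
    rw [Complex.norm_def, hnsR, Real.sqrt_one]
  have hRexp : Complex.exp ((φ:ℂ) * Complex.I) = R := by
    rw [Complex.exp_mul_I, hRdef, ← Complex.ofReal_cos, ← Complex.ofReal_sin, hcosφ, hsinφ]
  set u : ℂ := (p:ℂ) + (q:ℂ)*Complex.I with hudef
  have huexp : Complex.exp ((χ:ℂ) * Complex.I) = u := by
    rw [Complex.exp_mul_I, hudef, ← Complex.ofReal_cos, ← Complex.ofReal_sin, hcosχ, hsinχ]
  have hu0 : u ≠ 0 := by rw [← huexp]; exact Complex.exp_ne_zero _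
  have hbR := bR_ne b hb₁ R hnR
  have hRb := Rb_ne b hb₁ R hnR
  have hp' : (a*((e:ℝ)+2)) * p = c + a := by rw [hpdef]; field_simp
  have hq' : (a*((e:ℝ)+2)) * q = s := by rw [hqdef]; field_simp
  have hp'C : ((a:ℂ)*((e:ℂ)+2)) * (p:ℂ) = (c:ℂ) + (a:ℂ) := by exact_mod_cast congrArg Complex.ofReal hp'
  have hq'C : ((a:ℂ)*((e:ℂ)+2)) * (q:ℂ) = (s:ℂ) := by exact_mod_cast congrArg Complex.ofReal hq'
  have hmul : ((a:ℂ)*((e:ℂ)+2)) * u = R + (a:ℂ) := by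
    rw [hudef, hRdef]
    linear_combination hp'C + Complex.I * hq'C
  have hs2C : (s:ℂ)^2 = 1 - (c:ℂ)^2 := by exact_mod_cast congrArg Complex.ofReal hs2
  have hR2C : R^2 = 2*(c:ℂ)*R - 1 := by
    rw [hRdef]
    linear_combination (s:ℂ)^2 * Complex.I_sq - hs2C
  have habC : (b:ℂ) = (a:ℂ)*((e:ℂ)+3) := by exact_mod_cast congrArg Complex.ofReal hab
  have h2acC : 2*(a:ℂ)*(c:ℂ) = (a:ℂ)^2*(((e:ℂ)+2)^2-1) - 1 := by
    exact_mod_cast congrArg Complex.ofReal h2ac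
  have haDC : ((a:ℂ)*((e:ℂ)+2)) ≠ 0 := by
    have : ((a*((e:ℝ)+2) : ℝ) : ℂ) ≠ 0 := Complex.ofReal_ne_zero.2 (ne_of_gt haD)
    push_cast at this; exact this
  have hKey : ((b:ℂ)*R + 1) * u = R * (R + (b:ℂ)) := by
    apply mul_left_cancel₀ haDC
    have hKey' : ((b:ℂ)*R + 1) * (((a:ℂ)*((e:ℂ)+2)) * u) = ((a:ℂ)*((e:ℂ)+2)) * (R * (R + (b:ℂ))) := by
      rw [hmul]
      linear_combination ((b:ℂ) - (a:ℂ)*((e:ℂ)+2)) * hR2C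
        + (R*(2*(c:ℂ) + (a:ℂ) - (a:ℂ)*((e:ℂ)+2)) - 1) * habC + R * h2acC
    linear_combination hKey'
  have hθI : ((θ:ℂ)) * Complex.I = ((e+3:ℕ):ℂ) * ((φ:ℂ)*Complex.I) - ((e+2:ℕ):ℂ) * ((χ:ℂ)*Complex.I) := by
    rw [hθdef]; push_cast; ring
  have hexpθ : Complex.exp ((θ:ℂ)*Complex.I) = R^(e+3)/u^(e+2) := by
    rw [hθI, Complex.exp_sub, Complex.exp_nat_mul, Complex.exp_nat_mul, hRexp, huexp]
  have hratio : ((b:ℂ)*R+1)/(R+(b:ℂ)) = R / u := by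
    rw [div_eq_div_iff hRb hu0]
    linear_combination hKey
  have hxi : Complex.exp ((θ:ℂ)*Complex.I) = R * (((b:ℂ)*R+1)/(R+(b:ℂ)))^(e+2) := by
    rw [hexpθ, hratio, div_pow, ← mul_div_assoc]
    congr 1
    ring
  have hfixR : fIsing (e+2) (Complex.exp ((θ:ℂ)*Complex.I)) (b:ℂ) R = R := by
    have h1 : ((b:ℂ)*R+1)/(R+(b:ℂ)) * ((R+(b:ℂ))/((b:ℂ)*R+1)) = 1 := by
      rw [div_mul_div_comm, div_eq_one_iff_eq (mul_ne_zero hRb hbR)]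
      ring
    rw [fIsing, hxi, mul_assoc, ← mul_pow, h1, one_pow, mul_one]
  have hreRR : 2 * b * R.re = ((e:ℝ)+2)*(b^2-1) - (b^2+1) := by rw [hRre]; exact hc
  have hderR := deriv_eq_neg_one e b hb₁ _ R hnR hreRR hfixR
  refine ⟨θ, ⟨hθ0, hθπ⟩, ⟨R, hnR, hfixR, by rw [hderR]; simp⟩, ?_, ?_⟩
  · rintro θ' ⟨hθ'0, hθ'π⟩ ⟨R', hnR', hfix', hder'⟩
    have hξ'1 : ‖Complex.exp ((θ':ℂ)*Complex.I)‖ = 1 :=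
      Complex.norm_exp_ofReal_mul_I θ'
    have hre' := re_eq e b hb₁ _ R' hξ'1 hnR' hder'
    have hR're : R'.re = c := by
      have h1 : 2*b*R'.re = 2*b*c := by rw [hc]; exact hre'
      exact mul_left_cancel₀ (show (2*b) ≠ 0 by positivity) h1
    have hR'im : R'.im = s ∨ R'.im = -s := by
      have hnsR' : R'.re*R'.re + R'.im*R'.im = 1 := by
        rw [← Complex.normSq_apply, ← Complex.sq_norm, hnR']; norm_num
      rw [hR're] at hnsR'
      have h2 : (R'.im - s)*(R'.im + s) = 0 := by linear_combination hnsR' - hs2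
      rcases mul_eq_zero.mp h2 with h | h
      · left; linarith
      · right; linarith
    have hbR' := bR_ne b hb₁ R' hnR'
    have hRb' := Rb_ne b hb₁ R' hnR'
    have hξeq : Complex.exp ((θ':ℂ)*Complex.I) = R' * (((b:ℂ)*R'+1)/(R'+(b:ℂ)))^(e+2) := by
      have h := hfix'
      rw [fIsing, div_pow, ← mul_div_assoc, div_eq_iff (pow_ne_zero _ hbR')] at h
      rw [div_pow, ← mul_div_assoc, eq_div_iff (pow_ne_zero _ hRb')]
      linear_combination h
    rcases hR'im with him | him
    · have hR'R : R' = R := by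
        apply Complex.ext
        · rw [hR're, hRre]
        · rw [him, hRim]
      rw [hR'R, ← hxi] at hξeq
      have e1 : (Complex.exp ((θ':ℂ)*Complex.I)).arg = θ' :=
        arg_exp_eq θ' ⟨by linarith [Real.pi_pos], le_of_lt hθ'π⟩
      have e2 : (Complex.exp ((θ:ℂ)*Complex.I)).arg = θ :=
        arg_exp_eq θ ⟨by linarith [Real.pi_pos], le_of_lt hθπ⟩
      rw [hξeq, e2] at e1
      exact e1.symm
    · exfalso
      have hR'R : R' = (starRingEnd ℂ) R := by
        apply Complex.ext
        · rw [hR're]; simp [hRdef]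
        · rw [him]; simp [hRdef]
      have hconj : Complex.exp ((θ':ℂ)*Complex.I)
          = (starRingEnd ℂ) (Complex.exp ((θ:ℂ)*Complex.I)) := by
        rw [hξeq, hR'R, hxi]
        simp only [map_mul, map_pow, map_div₀, map_add, map_one, Complex.conj_ofReal]
      have h3 : (starRingEnd ℂ) (Complex.exp ((θ:ℂ)*Complex.I))
          = Complex.exp (((-θ : ℝ):ℂ)*Complex.I) := by
        rw [← Complex.exp_conj, map_mul, Complex.conj_ofReal, Complex.conj_I]
        push_cast
        ring_nf
      have e1 : (Complex.exp ((θ':ℂ)*Complex.I)).arg = θ' :=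
        arg_exp_eq θ' ⟨by linarith [Real.pi_pos], le_of_lt hθ'π⟩
      rw [hconj, h3, arg_exp_eq (-θ) ⟨by linarith, by linarith [Real.pi_pos]⟩] at e1
      linarith
  · intro R' hnR' hfix' hder'
    have hξ1 : ‖Complex.exp ((θ:ℂ)*Complex.I)‖ = 1 :=
      Complex.norm_exp_ofReal_mul_I θ
    have hre' := re_eq e b hb₁ _ R' hξ1 hnR' hder'
    have hbR' := bR_ne b hb₁ R' hnR'
    have hDneg := deriv_eq_neg_one e b hb₁ _ R' hnR' hre' hfix'
    have hec : Complex.exp (-((θ:ℂ)*Complex.I))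
        = (starRingEnd ℂ) (Complex.exp ((θ:ℂ)*Complex.I)) := by
      rw [← Complex.exp_conj]
      congr 1
      simp [Complex.conj_ofReal]
    refine ⟨hDneg, ?_, ?_, ?_⟩
    · have hns : Complex.normSq R' = 1 := by rw [← Complex.sq_norm, hnR']; norm_num
      have h1 : R' * (starRingEnd ℂ) R' = 1 := by
        rw [Complex.mul_conj, hns]; norm_num
      have h2 : R' + (starRingEnd ℂ) R' = 2*(R'.re:ℂ) := by
        rw [Complex.add_conj]; push_cast; ring
      have hreC : 2*(b:ℂ)*(R'.re:ℂ) = ((e:ℂ)+2)*((b:ℂ)^2-1) - ((b:ℂ)^2+1) := by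
        exact_mod_cast congrArg Complex.ofReal hre'
      have hb0C : (b:ℂ) ≠ 0 := Complex.ofReal_ne_zero.2 (ne_of_gt hb0)
      have hcoef : ((((e+2:ℕ)):ℂ)*(1-(b:ℂ)^2)+(1+(b:ℂ)^2))/(b:ℂ) = -(2*(R'.re:ℂ)) := by
        rw [div_eq_iff hb0C]
        push_cast
        linear_combination hreC
      rw [hcoef]
      linear_combination R'*h2 - h1
    · rw [hec, fIsing_conj, hfix']
    · have hbRc : (b:ℂ)*((starRingEnd ℂ) R') + 1 ≠ 0 := by
        apply bR_ne b hb₁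
        rw [Complex.norm_conj]; exact hnR'
      have hd' := hDneg
      rw [fIsing_deriv _ _ _ _ hbR'] at hd'
      rw [hec, fIsing_deriv _ _ _ _ hbRc]
      have hcc : (starRingEnd ℂ) (Complex.exp ((θ:ℂ)*Complex.I)) * ((e+2:ℕ):ℂ)
            * (((starRingEnd ℂ) R' + (b:ℂ))/((b:ℂ)*((starRingEnd ℂ) R')+1))^(e+2-1)
            * ((1-(b:ℂ)^2)/((b:ℂ)*((starRingEnd ℂ) R')+1)^2)
          = (starRingEnd ℂ) (Complex.exp ((θ:ℂ)*Complex.I) * ((e+2:ℕ):ℂ)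
            * ((R'+(b:ℂ))/((b:ℂ)*R'+1))^(e+2-1) * ((1-(b:ℂ)^2)/((b:ℂ)*R'+1)^2)) := by
        simp only [map_mul, map_pow, map_div₀, map_sub, map_add, map_one, map_natCast,
          Complex.conj_ofReal]
      rw [hcc, hd']
      simp
end

section
/- (Theorem 3.9, characterization of non-repelling fixed points) Let d ≥ 2 be an integer and let b ∈ ((d−1)/(d+1), 1), and let θ_b be as in Lemma 3.8(i). Then for ξ ∈ ∂𝔻, the map f_{ξ,b} has a fixed point R ∈ ∂𝔻 with |f'_{ξ,b}(R)| ≤ 1 (an attracting or parabolic fixed point on the unit circle) if and only if ξ ∈ {e^{iθ} : θ ∈ [−θ_b, θ_b]}. -/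
open Complex

lemma fIsing_hasDerivAt (d : ℕ) (ξ b R : ℂ) (hv : b*R+1 ≠ 0) :
    HasDerivAt (fIsing d ξ b)
      (ξ * (d * ((R+b)/(b*R+1))^(d-1) * ((1*(b*R+1) - (R+b)*b)/(b*R+1)^2))) R := by
  have h1 : HasDerivAt (fun R : ℂ => R + b) 1 R := (hasDerivAt_id R).add_const b
  have h2 : HasDerivAt (fun R : ℂ => b*R+1) b R := by
    simpa using ((hasDerivAt_id R).const_mul b).add_const (1:ℂ)
  exact ((h1.div h2 hv).pow d).const_mul ξ

lemma aux_nonzero_v {b : ℝ} (hb0 : 0 < b) (hb1 : b < 1) {R : ℂ} (habs : ‖R‖ = 1) :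
    (b:ℂ)*R+1 ≠ 0 := by
  intro h
  have : ‖(b:ℂ)*R‖ = ‖(-1 : ℂ)‖ := by
    rw [show (b:ℂ)*R = -1 by linear_combination h]
  simp [habs, Complex.norm_real, Real.norm_eq_abs, abs_of_pos hb0] at this
  linarith

lemma aux_nonzero_u {b : ℝ} (hb0 : 0 < b) (hb1 : b < 1) {R : ℂ} (habs : ‖R‖ = 1) :
    R + (b:ℂ) ≠ 0 := by
  intro h
  have : ‖R‖ = ‖(-(b:ℂ))‖ := by
    rw [show R = -(b:ℂ) by linear_combination h]
  simp [habs, Complex.norm_real, Real.norm_eq_abs, abs_of_pos hb0] at this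
  linarith

lemma circle_ident {b : ℝ} {R : ℂ} (habs : ‖R‖ = 1) :
    (R + (b:ℂ))*((b:ℂ)*R+1) = ((1+b^2+2*b*R.re : ℝ):ℂ)*R := by
  have hn : R * (starRingEnd ℂ) R = 1 := by
    rw [Complex.mul_conj]
    norm_cast
    rw [← Complex.sq_norm, habs, one_pow]
  have h2 : R*R + 1 = 2*R.re*R := by
    have := Complex.add_conj R
    have : (R + (starRingEnd ℂ) R) * R = (2*R.re : ℝ) * R := by rw [this]
    push_cast at this ⊢
    linear_combination this - hn
  push_cast
  linear_combination (b:ℂ) * h2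

lemma Dre_pos {b : ℝ} (hb0 : 0 < b) (hb1 : b < 1) {R : ℂ} (habs : ‖R‖ = 1) :
    0 < 1+b^2+2*b*R.re := by
  have h1 : |R.re| ≤ 1 := by
    rw [← habs]; exact Complex.abs_re_le_norm R
  rw [abs_le] at h1
  nlinarith [sq_nonneg (1-b)]

lemma deriv_fIsing_fixed {d : ℕ} (hd : 1 ≤ d) {b : ℝ} (hb0 : 0 < b) (hb1 : b < 1)
    {ξ R : ℂ} (habs : ‖R‖ = 1) (hfix : fIsing d ξ (b:ℂ) R = R) :
    deriv (fIsing d ξ (b:ℂ)) R = (((d*(1-b^2)/(1+b^2+2*b*R.re)) : ℝ) : ℂ) := by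
  have hv := aux_nonzero_v hb0 hb1 habs
  have hu := aux_nonzero_u hb0 hb1 habs
  have hq : (R+(b:ℂ))/((b:ℂ)*R+1) ≠ 0 := div_ne_zero hu hv
  have hR : R ≠ 0 := by
    intro h; rw [h] at habs; simp at habs
  have hDre : ((1+b^2+2*b*R.re : ℝ):ℂ) ≠ 0 := by
    exact_mod_cast (Dre_pos hb0 hb1 habs).ne'
  rw [(fIsing_hasDerivAt d ξ (b:ℂ) R hv).deriv]
  have hstep : ξ * ((R+(b:ℂ))/((b:ℂ)*R+1))^(d-1) = R / ((R+(b:ℂ))/((b:ℂ)*R+1)) := by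
    rw [eq_div_iff hq, mul_assoc, ← pow_succ, Nat.sub_add_cancel hd]
    exact hfix
  have hξq : ξ * ((R+(b:ℂ))/((b:ℂ)*R+1))^(d-1) = R * ((b:ℂ)*R+1) / (R+(b:ℂ)) := by
    rw [hstep, div_div_eq_mul_div]
  calc ξ * (d * ((R+(b:ℂ))/((b:ℂ)*R+1))^(d-1) * ((1*((b:ℂ)*R+1) - (R+(b:ℂ))*(b:ℂ))/((b:ℂ)*R+1)^2))
      = (d:ℂ) * (ξ * ((R+(b:ℂ))/((b:ℂ)*R+1))^(d-1)) * ((1-(b:ℂ)^2)/((b:ℂ)*R+1)^2) := by ring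
    _ = (d:ℂ) * (R * ((b:ℂ)*R+1) / (R+(b:ℂ))) * ((1-(b:ℂ)^2)/((b:ℂ)*R+1)^2) := by rw [hξq]
    _ = (d:ℂ)*(1-(b:ℂ)^2)*R / ((R+(b:ℂ))*((b:ℂ)*R+1)) := by
        field_simp
    _ = (d:ℂ)*(1-(b:ℂ)^2)*R / (((1+b^2+2*b*R.re : ℝ):ℂ)*R) := by rw [circle_ident habs]
    _ = (((d*(1-b^2)/(1+b^2+2*b*R.re)) : ℝ) : ℂ) := by
        push_cast
        rw [mul_comm (((1:ℂ)+(b:ℂ)^2+2*(b:ℂ)*(R.re:ℂ))) R, ← div_div]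
        rw [mul_div_assoc, mul_div_assoc, div_self hR]
        push_cast at hDre
        field_simp

noncomputable def psiW (d : ℕ) (b s : ℝ) : ℝ := 1 - d*(1-b^2)/(1+b^2+2*b*Real.cos s)
noncomputable def psiF (d : ℕ) (b t : ℝ) : ℝ := ∫ s in (0:ℝ)..t, psiW d b s

lemma denom_pos {b : ℝ} (hb0 : 0 < b) (hb1 : b < 1) (s : ℝ) :
    0 < 1+b^2+2*b*Real.cos s := by
  nlinarith [Real.neg_one_le_cos s, sq_nonneg (1-b)]

lemma psiW_cont {d : ℕ} {b : ℝ} (hb0 : 0 < b) (hb1 : b < 1) : Continuous (psiW d b) := by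
  unfold psiW
  fun_prop (disch := exact fun s => (denom_pos hb0 hb1 s).ne')

lemma psiF_hasDerivAt {d : ℕ} {b : ℝ} (hb0 : 0 < b) (hb1 : b < 1) (t : ℝ) :
    HasDerivAt (psiF d b) (psiW d b t) t :=
  intervalIntegral.integral_hasDerivAt_right
    ((psiW_cont hb0 hb1).intervalIntegrable 0 t)
    ((psiW_cont hb0 hb1).stronglyMeasurableAtFilter _ _)
    (psiW_cont hb0 hb1).continuousAt

lemma psiF_zero (d : ℕ) (b : ℝ) : psiF d b 0 = 0 := intervalIntegral.integral_same

lemma psiF_neg (d : ℕ) (b : ℝ) (t : ℝ) : psiF d b (-t) = - psiF d b t := by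
  have h := intervalIntegral.integral_comp_neg (a := 0) (b := t) (psiW d b)
  have he : ∀ x, psiW d b (-x) = psiW d b x := by
    intro x; unfold psiW; rw [Real.cos_neg]
  simp only [he] at h
  unfold psiF
  rw [h, neg_zero, intervalIntegral.integral_symm (-t) 0]

lemma exp_re_ofReal_mul_I (t : ℝ) : (Complex.exp ((t:ℂ)*I)).re = Real.cos t := by
  rw [Complex.exp_re]
  simp

lemma keyA {d : ℕ} (hd : 1 ≤ d) {b : ℝ} (hb0 : 0 < b) (hb1 : b < 1) (t : ℝ) :
    Complex.exp ((psiF d b t : ℂ) * I)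
      = Complex.exp ((t:ℂ)*I) * (((b:ℂ)*Complex.exp ((t:ℂ)*I)+1)/(Complex.exp ((t:ℂ)*I)+(b:ℂ)))^d := by
  set H : ℝ → ℂ := fun t => Complex.exp ((t:ℂ)*I) *
      (((b:ℂ)*Complex.exp ((t:ℂ)*I)+1)/(Complex.exp ((t:ℂ)*I)+(b:ℂ)))^d *
      Complex.exp ((↑(-psiF d b t) : ℂ) * I) with hH
  have habs : ∀ s : ℝ, ‖(Complex.exp ((s:ℂ)*I))‖ = 1 := fun s =>
    Complex.norm_exp_ofReal_mul_I s
  have hconst : ∀ s : ℝ, H s = H 0 := by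
    have hdiff : ∀ s : ℝ, HasDerivAt H 0 s := by
      intro s
      set z := Complex.exp ((s:ℂ)*I) with hz
      have hu : (b:ℂ)*z+1 ≠ 0 := aux_nonzero_v hb0 hb1 (habs s)
      have hv : z+(b:ℂ) ≠ 0 := aux_nonzero_u hb0 hb1 (habs s)
      have hE : HasDerivAt (fun s : ℝ => Complex.exp ((s:ℂ)*I)) (z*I) s := by
        have h1 : HasDerivAt (fun w : ℂ => Complex.exp (w*I)) (z*I) (s:ℂ) := by
          simpa using ((hasDerivAt_id ((s:ℂ))).mul_const I).cexp
        exact h1.comp_ofReal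
      have hG : HasDerivAt (fun z : ℂ => z * (((b:ℂ)*z+1)/(z+(b:ℂ)))^d)
          ((((b:ℂ)*z+1)/(z+(b:ℂ)))^d
            + z * ((d:ℂ) * (((b:ℂ)*z+1)/(z+(b:ℂ)))^(d-1)
              * (((b:ℂ)*(z+(b:ℂ)) - ((b:ℂ)*z+1)*1)/(z+(b:ℂ))^2))) z := by
        have hnum : HasDerivAt (fun z : ℂ => (b:ℂ)*z+1) (b:ℂ) z := by
          simpa using ((hasDerivAt_id z).const_mul (b:ℂ)).add_const (1:ℂ)
        have hden : HasDerivAt (fun z : ℂ => z+(b:ℂ)) 1 z := (hasDerivAt_id z).add_const (b:ℂ)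
        have hq := (hnum.div hden hv).pow d
        have := (hasDerivAt_id z).mul hq
        exact this.congr_deriv (by simp only [id, one_mul, Pi.div_apply, Pi.pow_apply])
      have hGt : HasDerivAt (fun s : ℝ => Complex.exp ((s:ℂ)*I) *
          (((b:ℂ)*Complex.exp ((s:ℂ)*I)+1)/(Complex.exp ((s:ℂ)*I)+(b:ℂ)))^d)
          ((z*I) * ((((b:ℂ)*z+1)/(z+(b:ℂ)))^d
            + z * ((d:ℂ) * (((b:ℂ)*z+1)/(z+(b:ℂ)))^(d-1)
              * (((b:ℂ)*(z+(b:ℂ)) - ((b:ℂ)*z+1)*1)/(z+(b:ℂ))^2)))) s := by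
        have := HasDerivAt.scomp (𝕜 := ℝ) s hG hE
        exact this
      have hP : HasDerivAt (fun s : ℝ => Complex.exp ((↑(-psiF d b s) : ℂ) * I))
          (Complex.exp ((↑(-psiF d b s) : ℂ) * I) * (((-psiW d b s : ℝ):ℂ) * I)) s := by
        have h1 : HasDerivAt (fun s : ℝ => -psiF d b s) (-psiW d b s) s :=
          (psiF_hasDerivAt hb0 hb1 s).neg
        have h2 : HasDerivAt (fun s : ℝ => ((-psiF d b s : ℝ) : ℂ)) ((-psiW d b s : ℝ):ℂ) s :=
          h1.ofReal_comp
        have h3 : HasDerivAt (fun s : ℝ => ((-psiF d b s : ℝ) : ℂ) * I) (((-psiW d b s : ℝ):ℂ) * I) s :=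
          h2.mul_const I
        exact h3.cexp
      have hHd := hGt.mul hP
      -- now show the derivative value is 0
      set u := (b:ℂ)*z+1
      set v := z+(b:ℂ)
      set w := psiW d b s
      set P := Complex.exp ((↑(-psiF d b s) : ℂ) * I)
      have hDcos : (0:ℝ) < 1+b^2+2*b*Real.cos s := denom_pos hb0 hb1 s
      have hDcosC : ((1+b^2+2*b*Real.cos s : ℝ):ℂ) ≠ 0 := by exact_mod_cast hDcos.ne'
      have huv : u*v = ((1+b^2+2*b*Real.cos s : ℝ):ℂ)*z := by
        have := circle_ident (b := b) (habs s)
        rw [← exp_re_ofReal_mul_I s]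
        rw [← hz] at this ⊢
        linear_combination this
      have hB : u*v + (d:ℂ)*z*((b:ℂ)*v-u) - ((w : ℝ):ℂ)*(u*v) = 0 := by
        have hwdef : (w:ℝ) = 1 - d*(1-b^2)/(1+b^2+2*b*Real.cos s) := rfl
        rw [huv, hwdef]
        have hbv : (b:ℂ)*v - u = (b:ℂ)^2 - 1 := by simp only [u, v]; ring
        rw [hbv]
        have hcastD : ((1+b^2+2*b*Real.cos s : ℝ):ℂ) = 1+(b:ℂ)^2+2*(b:ℂ)*Complex.cos (s:ℂ) := by
          push_cast; ring
        have hDcosC' : ((1:ℂ)+(b:ℂ)^2+2*(b:ℂ)*Complex.cos (s:ℂ)) ≠ 0 := by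
          rw [← hcastD]; exact hDcosC
        have hdm : ((d:ℂ)*(1-(b:ℂ)^2))/((1:ℂ)+(b:ℂ)^2+2*(b:ℂ)*Complex.cos (s:ℂ))
            * ((1:ℂ)+(b:ℂ)^2+2*(b:ℂ)*Complex.cos (s:ℂ)) = (d:ℂ)*(1-(b:ℂ)^2) :=
          div_mul_cancel₀ _ hDcosC'
        push_cast
        linear_combination z * hdm
      have hpow : (u/v)^d = (u/v)^(d-1)*(u/v) := by
        rw [← pow_succ, Nat.sub_add_cancel hd]
      have hval : ((z*I) * ((u/v)^d
            + z * ((d:ℂ) * (u/v)^(d-1) * (((b:ℂ)*v - u*1)/v^2)))) * P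
          + (z * (u/v)^d) * (P * (((-w : ℝ):ℂ) * I)) = 0 := by
        have hfact : ((z*I) * ((u/v)^d
            + z * ((d:ℂ) * (u/v)^(d-1) * (((b:ℂ)*v - u*1)/v^2)))) * P
          + (z * (u/v)^d) * (P * (((-w : ℝ):ℂ) * I))
            = (P * I * (u/v)^(d-1) * z) *
              ((u/v) + (z*(d:ℂ)*((b:ℂ)*v-u))/v^2 - ((w : ℝ):ℂ)*(u/v)) := by
          rw [hpow]; push_cast; ring
        have hzero : (u/v) + (z*(d:ℂ)*((b:ℂ)*v-u))/v^2 - ((w : ℝ):ℂ)*(u/v) = 0 := by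
          have heq : (u/v) + (z*(d:ℂ)*((b:ℂ)*v-u))/v^2 - ((w : ℝ):ℂ)*(u/v)
              = (u*v + (d:ℂ)*z*((b:ℂ)*v-u) - ((w : ℝ):ℂ)*(u*v))/v^2 := by
            field_simp
          rw [heq, hB, zero_div]
        rw [hfact, hzero, mul_zero]
      exact hval ▸ hHd
    intro s
    exact is_const_of_deriv_eq_zero (fun x => (hdiff x).differentiableAt)
      (fun x => (hdiff x).deriv) s 0
  have hH0 : H 0 = 1 := by
    simp only [hH, psiF_zero, neg_zero]
    push_cast
    rw [zero_mul, Complex.exp_zero]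
    have : ((b:ℂ)*1+1)/(1+(b:ℂ)) = 1 := by
      rw [mul_one, div_eq_one_iff_eq]
      · ring
      · intro h
        have : (1+b : ℝ) = 0 := by exact_mod_cast h
        linarith
    rw [this]
    simp
  have hHt := (hconst t).trans hH0
  simp only [hH] at hHt
  have := congrArg (· * Complex.exp ((↑(psiF d b t) : ℂ) * I)) hHt
  simp only [one_mul] at this
  rw [mul_assoc, ← Complex.exp_add] at this
  push_cast at this ⊢
  rw [show -(psiF d b t:ℂ) * I + (psiF d b t:ℂ) * I = 0 by ring, Complex.exp_zero, mul_one] at this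
  exact this.symm

lemma fixedA {d : ℕ} (hd : 1 ≤ d) {b : ℝ} (hb0 : 0 < b) (hb1 : b < 1) (t : ℝ) :
    fIsing d (Complex.exp ((psiF d b t : ℂ) * I)) (b:ℂ) (Complex.exp ((t:ℂ)*I))
      = Complex.exp ((t:ℂ)*I) := by
  have habs := Complex.norm_exp_ofReal_mul_I t
  set z := Complex.exp ((t:ℂ)*I)
  have hu : (b:ℂ)*z+1 ≠ 0 := aux_nonzero_v hb0 hb1 habs
  have hv : z+(b:ℂ) ≠ 0 := aux_nonzero_u hb0 hb1 habs
  rw [fIsing, keyA hd hb0 hb1 t]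
  rw [mul_assoc, ← mul_pow, div_mul_div_comm]
  rw [mul_comm ((b:ℂ)*z+1) (z+(b:ℂ)), div_self (by exact mul_ne_zero hv hu), one_pow, mul_one]

lemma fIsing_fixed_unique {d : ℕ} {b : ℝ} (hb0 : 0 < b) (hb1 : b < 1) {ξ ξ' R : ℂ}
    (habs : ‖R‖ = 1) (h : fIsing d ξ (b:ℂ) R = R) (h' : fIsing d ξ' (b:ℂ) R = R) :
    ξ = ξ' := by
  have hq : ((R+(b:ℂ))/((b:ℂ)*R+1))^d ≠ 0 :=
    pow_ne_zero d (div_ne_zero (aux_nonzero_u hb0 hb1 habs) (aux_nonzero_v hb0 hb1 habs))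
  exact mul_right_cancel₀ hq (h.trans h'.symm)

lemma int_zero_of_between {n : ℤ} (h1 : -(2*Real.pi) < 2*Real.pi*n) (h2 : 2*Real.pi*n < 2*Real.pi) :
    n = 0 := by
  have hpi : (0:ℝ) < 2*Real.pi := by positivity
  have h1' : (-1:ℝ) < (n:ℝ) := (mul_lt_mul_iff_right₀ hpi).mp (by linarith)
  have h2' : (n:ℝ) < 1 := (mul_lt_mul_iff_right₀ hpi).mp (by linarith)
  have ha : -1 < n := by exact_mod_cast h1'
  have hb : n < 1 := by exact_mod_cast h2'
  omega

lemma int_not_between {n : ℤ} (h1 : 0 < 2*Real.pi*n) (h2 : 2*Real.pi*n < 2*Real.pi) : False := by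
  have hpi : (0:ℝ) < 2*Real.pi := by positivity
  have h1' : (0:ℝ) < (n:ℝ) := (mul_lt_mul_iff_right₀ hpi).mp (by linarith)
  have h2' : (n:ℝ) < 1 := (mul_lt_mul_iff_right₀ hpi).mp (by linarith)
  have ha : 0 < n := by exact_mod_cast h1'
  have hb : n < 1 := by exact_mod_cast h2'
  omega

/-- Theorem 3.9: for `b ∈ ((d-1)/(d+1), 1)` and `θ_b` the parabolic parameter of
Lemma 3.8(i), the map `f_{ξ,b}` (`|ξ| = 1`) has an attracting or parabolic fixed point
on the unit circle if and only if `ξ = e^{iθ}` with `θ ∈ [-θ_b, θ_b]`. -/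
theorem fIsing_nonrepelling_fixed_point_iff (d : ℕ) (hd : 2 ≤ d) (b : ℝ)
    (hb₁ : ((d : ℝ) - 1) / ((d : ℝ) + 1) < b) (hb₂ : b < 1)
    (θb : ℝ) (hθb : θb ∈ Set.Ioo 0 Real.pi)
    (hpar : ∃ R : ℂ, ‖R‖ = 1 ∧
      fIsing d (Complex.exp (θb * Complex.I)) (b : ℂ) R = R ∧
      deriv (fIsing d (Complex.exp (θb * Complex.I)) (b : ℂ)) R = 1) :
    ∀ ξ : ℂ, ‖ξ‖ = 1 →
      ((∃ R : ℂ, ‖R‖ = 1 ∧ fIsing d ξ (b : ℂ) R = R ∧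
          ‖deriv (fIsing d ξ (b : ℂ)) R‖ ≤ 1) ↔
        ∃ θ : ℝ, -θb ≤ θ ∧ θ ≤ θb ∧ ξ = Complex.exp (θ * Complex.I)) := by
  have hd1 : 1 ≤ d := le_trans (by norm_num) hd
  have hdR : (2:ℝ) ≤ (d:ℝ) := by exact_mod_cast hd
  have hb0 : 0 < b := by
    have h1 : (0:ℝ) < ((d:ℝ)-1)/((d:ℝ)+1) := div_pos (by linarith) (by linarith)
    linarith
  -- the critical cosine value
  set c : ℝ := ((d:ℝ)*(1-b^2) - (1+b^2))/(2*b) with hc_def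
  have hkey_c : 1 + b^2 + 2*b*c = (d:ℝ)*(1-b^2) := by
    have hb0' : b ≠ 0 := hb0.ne'
    have e : 2*b*(((d:ℝ)*(1-b^2) - (1+b^2))/(2*b)) = (d:ℝ)*(1-b^2) - (1+b^2) := by field_simp
    rw [hc_def, e]; ring
  have hc1 : c < 1 := by
    rw [hc_def, div_lt_one (by linarith)]
    have : ((d:ℝ)+1)*b > (d:ℝ)-1 := by
      rw [div_lt_iff₀ (by linarith)] at hb₁
      linarith
    nlinarith
  have hcm1 : -1 < c := by
    rw [hc_def, lt_div_iff₀ (by linarith : (0:ℝ) < 2*b)]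
    have h1b2 : (0:ℝ) < 1 - b^2 := by nlinarith
    have h2 : 2*(1-b^2) ≤ (d:ℝ)*(1-b^2) := by nlinarith
    nlinarith [mul_pos (sub_pos.2 hb₂) (show (0:ℝ) < 3*b+1 by linarith)]
  set tstar : ℝ := Real.arccos c with hts_def
  have hts_pos : 0 < tstar := Real.arccos_pos.2 hc1
  have hts_le : tstar ≤ Real.pi := Real.arccos_le_pi c
  have hcosts : Real.cos tstar = c := Real.cos_arccos hcm1.le hc1.le
  -- cosine bound on [-tstar, tstar]
  have hcos_ge : ∀ t : ℝ, |t| ≤ Real.pi → |t| ≤ tstar → c ≤ Real.cos t := by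
    intro t hpi hts
    have h := Real.cos_le_cos_of_nonneg_of_le_pi (abs_nonneg t) hts_le hts
    rw [Real.cos_abs] at h
    rw [← hcosts]
    exact h
  -- derivative of psiF is nonneg there
  have hW_nonneg : ∀ t : ℝ, c ≤ Real.cos t → 0 ≤ psiW d b t := by
    intro t hct
    have hD := denom_pos hb0 hb₂ t
    have hnum : (d:ℝ)*(1-b^2) ≤ 1+b^2+2*b*Real.cos t := by nlinarith
    unfold psiW
    rw [sub_nonneg, div_le_one hD]
    exact hnum
  have hdiffPsi : Differentiable ℝ (psiF d b) :=
    fun t => (psiF_hasDerivAt hb0 hb₂ t).differentiableAt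
  have hmono : MonotoneOn (psiF d b) (Set.Icc (-tstar) tstar) := by
    apply monotoneOn_of_deriv_nonneg (convex_Icc _ _) hdiffPsi.continuous.continuousOn
      hdiffPsi.differentiableOn
    intro x hx
    rw [interior_Icc] at hx
    rw [(psiF_hasDerivAt hb0 hb₂ x).deriv]
    apply hW_nonneg
    apply hcos_ge
    · rw [abs_le]; constructor <;> [linarith [hx.1, hts_le]; linarith [hx.2, hts_le]]
    · rw [abs_le]; exact ⟨hx.1.le, hx.2.le⟩
  -- psiF tstar ∈ (0, π)
  have hA_pos : 0 < psiF d b tstar := by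
    apply intervalIntegral.intervalIntegral_pos_of_pos_on
      ((psiW_cont hb0 hb₂).intervalIntegrable 0 tstar) _ hts_pos
    intro x hx
    have hcx : c < Real.cos x := by
      rw [← hcosts]
      exact Real.cos_lt_cos_of_nonneg_of_le_pi hx.1.le hts_le hx.2
    have hD := denom_pos hb0 hb₂ x
    have hnum : (d:ℝ)*(1-b^2) < 1+b^2+2*b*Real.cos x := by nlinarith
    unfold psiW
    rw [sub_pos, div_lt_one hD]
    exact hnum
  have hA_lt : psiF d b tstar < tstar := by
    have hpos : 0 < ∫ x in (0:ℝ)..tstar, (1 - psiW d b x) := by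
      apply intervalIntegral.intervalIntegral_pos_of_pos_on
        ((continuous_const.sub (psiW_cont hb0 hb₂)).intervalIntegrable 0 tstar) _ hts_pos
      intro x _
      show 0 < 1 - psiW d b x
      have hD := denom_pos hb0 hb₂ x
      have : 0 < (d:ℝ)*(1-b^2) := by nlinarith
      unfold psiW
      have : 0 < (d:ℝ)*(1-b^2)/(1+b^2+2*b*Real.cos x) := by positivity
      linarith
    have hsplit : (∫ x in (0:ℝ)..tstar, (1 - psiW d b x))
        = tstar - psiF d b tstar := by
      rw [intervalIntegral.integral_sub intervalIntegrable_const
        ((psiW_cont hb0 hb₂).intervalIntegrable 0 tstar)]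
      simp [psiF]
    linarith [hsplit ▸ hpos]
  have hA_lt_pi : psiF d b tstar < Real.pi := lt_of_lt_of_le hA_lt hts_le
  -- derivative/abs facts at a fixed point
  have habs_deriv : ∀ (ξ R : ℂ), ‖R‖ = 1 → fIsing d ξ (b:ℂ) R = R →
      ‖deriv (fIsing d ξ (b:ℂ)) R‖ = (d:ℝ)*(1-b^2)/(1+b^2+2*b*R.re) := by
    intro ξ R habs hfix
    rw [deriv_fIsing_fixed hd1 hb0 hb₂ habs hfix, Complex.norm_real, Real.norm_eq_abs]
    apply _root_.abs_of_nonneg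
    have hD := Dre_pos hb0 hb₂ habs
    have hnum : (0:ℝ) ≤ (d:ℝ)*(1-b^2) := by nlinarith
    positivity
  -- identification θb = psiF d b tstar
  have hθ_eq : θb = psiF d b tstar := by
    obtain ⟨R₀, habs₀, hfix₀, hder₀⟩ := hpar
    have hder_eq := deriv_fIsing_fixed hd1 hb0 hb₂ habs₀ hfix₀
    rw [hder₀] at hder_eq
    have hreal : (d:ℝ)*(1-b^2)/(1+b^2+2*b*R₀.re) = 1 := by
      have := hder_eq.symm
      rw [show (1:ℂ) = ((1:ℝ):ℂ) by norm_num] at this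
      exact_mod_cast this
    have hD₀ := Dre_pos hb0 hb₂ habs₀
    have hre₀ : R₀.re = c := by
      rw [div_eq_one_iff_eq hD₀.ne'] at hreal
      have h3 : 2*b*R₀.re = 2*b*c := by linarith [hkey_c]
      exact mul_left_cancel₀ (by positivity : (2*b:ℝ) ≠ 0) h3
    set t₀ := R₀.arg with ht₀
    have hR₀ne : R₀ ≠ 0 := by
      intro h; rw [h] at habs₀; simp at habs₀
    have hR₀exp : R₀ = Complex.exp ((t₀:ℂ)*I) := by
      have := Complex.norm_mul_exp_arg_mul_I R₀
      rw [habs₀] at this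
      simpa using this.symm
    have hcos₀ : Real.cos t₀ = c := by
      rw [ht₀, Complex.cos_arg hR₀ne, habs₀, div_one, hre₀]
    have habs_t₀ : |t₀| = tstar := by
      rw [hts_def, ← hcos₀, ← Real.cos_abs]
      exact (Real.arccos_cos (abs_nonneg t₀) (Complex.abs_arg_le_pi R₀)).symm
    have hfixA := fixedA hd1 hb0 hb₂ t₀
    rw [← hR₀exp] at hfixA
    have hxi_eq : Complex.exp ((θb:ℂ)*I) = Complex.exp ((psiF d b t₀ : ℂ)*I) :=
      fIsing_fixed_unique hb0 hb₂ habs₀ hfix₀ hfixA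
    have hdiffexp : Complex.exp (((θb - psiF d b t₀ : ℝ):ℂ)*I) = 1 := by
      rw [Complex.exp_eq_one_iff]
      have := Complex.exp_eq_exp_iff_exists_int.mp hxi_eq
      obtain ⟨n, hn⟩ := this
      exact ⟨n, by push_cast at hn ⊢; linear_combination hn⟩
    rw [Complex.exp_eq_one_iff] at hdiffexp
    obtain ⟨n, hn⟩ := hdiffexp
    have hn' : θb - psiF d b t₀ = 2*Real.pi*n := by
      have h2 : (((θb - psiF d b t₀ : ℝ)):ℂ) = ((2*Real.pi*(n:ℝ) : ℝ):ℂ) := by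
        apply mul_right_cancel₀ Complex.I_ne_zero
        rw [hn]; push_cast; ring
      exact_mod_cast h2
    have hpi := Real.pi_pos
    rcases abs_eq (le_of_lt hts_pos) |>.mp habs_t₀ with h | h
    · -- t₀ = tstar
      rw [h] at hn'
      have hb1' : 2*Real.pi*n < 2*Real.pi := by
        have := hθb.2; have := hA_pos; linarith
      have hb2' : -(2*Real.pi) < 2*Real.pi*n := by
        have := hθb.1; have := hA_lt_pi; linarith
      have hn0 : n = 0 := int_zero_of_between hb2' hb1'
      rw [hn0] at hn'
      push_cast at hn'
      linarith
    · -- t₀ = -tstar, contradiction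
      exfalso
      rw [h, psiF_neg] at hn'
      have h1 : (0:ℝ) < 2*Real.pi*n := by
        have := hθb.1; have := hA_pos; linarith
      have h2 : 2*Real.pi*n < 2*Real.pi := by
        have := hθb.2; have := hA_lt_pi; linarith
      exact int_not_between h1 h2
  -- main equivalence
  intro ξ hξ
  constructor
  · rintro ⟨R, habsR, hfix, hder_le⟩
    rw [habs_deriv ξ R habsR hfix] at hder_le
    have hD := Dre_pos hb0 hb₂ habsR
    have hre_ge : c ≤ R.re := by
      rw [div_le_one hD] at hder_le
      nlinarith [hkey_c]
    set t := R.arg with ht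
    have hRne : R ≠ 0 := by
      intro h; rw [h] at habsR; simp at habsR
    have hRexp : R = Complex.exp ((t:ℂ)*I) := by
      have := Complex.norm_mul_exp_arg_mul_I R
      rw [habsR] at this
      simpa using this.symm
    have hcost : Real.cos t = R.re := by
      rw [ht, Complex.cos_arg hRne, habsR, div_one]
    have habst : |t| ≤ tstar := by
      by_contra hcon
      push_neg at hcon
      have : Real.cos |t| < Real.cos tstar :=
        Real.cos_lt_cos_of_nonneg_of_le_pi hts_pos.le (Complex.abs_arg_le_pi R) hcon
      rw [Real.cos_abs, hcost, hcosts] at this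
      linarith
    have hfixA := fixedA hd1 hb0 hb₂ t
    rw [← hRexp] at hfixA
    have hxi_eq : ξ = Complex.exp ((psiF d b t : ℂ)*I) :=
      fIsing_fixed_unique hb0 hb₂ habsR hfix hfixA
    refine ⟨psiF d b t, ?_, ?_, by exact_mod_cast hxi_eq⟩
    · rw [hθ_eq, ← psiF_neg]
      apply hmono (Set.mem_Icc.2 ⟨le_refl _, by linarith [hts_pos]⟩)
        (Set.mem_Icc.2 (abs_le.1 habst))
      linarith [abs_le.1 habst]
    · rw [hθ_eq]
      exact hmono (Set.mem_Icc.2 (abs_le.1 habst))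
        (Set.mem_Icc.2 ⟨by linarith [hts_pos], le_refl _⟩) (abs_le.1 habst).2
  · rintro ⟨θ, hθ1, hθ2, hξeq⟩
    have hIVT : ∃ s ∈ Set.Icc (-tstar) tstar, psiF d b s = θ := by
      have hsub := intermediate_value_Icc (by linarith : -tstar ≤ tstar)
        hdiffPsi.continuous.continuousOn (f := psiF d b)
      have hmem : θ ∈ Set.Icc (psiF d b (-tstar)) (psiF d b tstar) := by
        rw [psiF_neg, ← hθ_eq]
        exact ⟨hθ1, hθ2⟩
      obtain ⟨s, hs, hps⟩ := hsub hmem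
      exact ⟨s, hs, hps⟩
    obtain ⟨s, hs, hps⟩ := hIVT
    refine ⟨Complex.exp ((s:ℂ)*I), Complex.norm_exp_ofReal_mul_I s, ?_, ?_⟩
    · rw [hξeq, ← hps]
      exact_mod_cast fixedA hd1 hb0 hb₂ s
    · have hfixA : fIsing d ξ (b:ℂ) (Complex.exp ((s:ℂ)*I)) = Complex.exp ((s:ℂ)*I) := by
        rw [hξeq, ← hps]
        exact_mod_cast fixedA hd1 hb0 hb₂ s
      rw [habs_deriv ξ _ (Complex.norm_exp_ofReal_mul_I s) hfixA]
      have hre : (Complex.exp ((s:ℂ)*I)).re = Real.cos s := exp_re_ofReal_mul_I s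
      rw [hre]
      have hcs : c ≤ Real.cos s := by
        apply hcos_ge
        · rw [abs_le]
          exact ⟨by linarith [hs.1, hts_le], by linarith [hs.2, hts_le]⟩
        · rw [abs_le]; exact hs
      have hD := denom_pos hb0 hb₂ s
      rw [div_le_one hD]
      have hmul : 2*b*c ≤ 2*b*Real.cos s :=
        mul_le_mul_of_nonneg_left hcs (by positivity)
      linarith [hkey_c]
end

section
/- (Theorem 3.2(i), anti-ferromagnetic invariant arc) Let d ≥ 2 be an integer and let b ∈ (1, (d+1)/(d−1)). Then there exists α_b ∈ (0,π), namely the smallest α ∈ (0,π) satisfying e^{iα}·((e^{iα}+b)/(b·e^{iα}+1))^d = 1, such that for every θ ∈ (−α_b, α_b) and ξ = e^{iθ}, the shortest closed circular arc I ⊂ ∂𝔻 with boundary points 1 and ξ (i.e. I = {e^{it} : t between 0 and θ}) satisfies f_{ξ,b}(I) ⊆ I. In particular, the orbit of ξ under f_{ξ,b} avoids −1: f_{ξ,b}^{∘n}(ξ) ≠ −1 for all n ≥ 0. -/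
/-- The closed circular arc `{e^{it} : t between 0 and s}` on the unit circle; its
boundary points are `1` and `e^{is}`. -/
def circArc (s : ℝ) : Set ℂ := (fun t : ℝ => Complex.exp (t * Complex.I)) '' Set.uIcc 0 s


section IsingAux

open Complex Set


noncomputable def wI (b t : ℝ) : ℂ := 1 + (b : ℂ) * Complex.exp (t * Complex.I)
noncomputable def gI (b t : ℝ) : ℝ := t - 2 * (Complex.log (wI b t)).im
noncomputable def GI (d : ℕ) (b t : ℝ) : ℝ := t + d * gI b t

lemma wI_ne {b : ℝ} (hb : 1 < b) (t : ℝ) : wI b t ≠ 0 := by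
  intro h
  have h2 : (b : ℂ) * Complex.exp (t * Complex.I) = -1 := by
    have := h; unfold wI at this; linear_combination this
  have h3 : ‖(b : ℂ) * Complex.exp (t * Complex.I)‖ = b := by
    rw [norm_mul, Complex.norm_exp_ofReal_mul_I, Complex.norm_real, Real.norm_eq_abs,
      abs_of_pos (by linarith : (0:ℝ) < b), mul_one]
  rw [h2] at h3; simp at h3; linarith

lemma wI_re (b t : ℝ) : (wI b t).re = 1 + b * Real.cos t := by
  simp [wI, Complex.add_re, Complex.mul_re, Complex.exp_ofReal_mul_I_re,
    Complex.exp_ofReal_mul_I_im]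

lemma wI_im (b t : ℝ) : (wI b t).im = b * Real.sin t := by
  simp [wI, Complex.add_im, Complex.mul_im, Complex.exp_ofReal_mul_I_re,
    Complex.exp_ofReal_mul_I_im]

lemma wI_normSq {b : ℝ} (t : ℝ) :
    Complex.normSq (wI b t) = b ^ 2 + 2 * b * Real.cos t + 1 := by
  rw [Complex.normSq_apply, wI_re, wI_im]
  nlinarith [Real.sin_sq_add_cos_sq t]

lemma NI_pos {b : ℝ} (hb : 1 < b) (t : ℝ) : 0 < b ^ 2 + 2 * b * Real.cos t + 1 := by
  nlinarith [Real.neg_one_le_cos t, Real.cos_le_one t]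

lemma wI_slit {b : ℝ} (hb : 1 < b) {t : ℝ} (ht : t ∈ Set.Ioo (-Real.pi) Real.pi) :
    wI b t ∈ Complex.slitPlane := by
  rw [Complex.mem_slitPlane_iff]
  rcases eq_or_ne (Real.sin t) 0 with hs | hs
  · left
    have ht0 : t = 0 := (Real.sin_eq_zero_iff_of_lt_of_lt ht.1 ht.2).1 hs
    rw [wI_re, ht0, Real.cos_zero]; linarith
  · right; rw [wI_im]; intro h
    exact hs ((mul_eq_zero.1 h).resolve_left (by positivity))

lemma wI_arg_ne {b : ℝ} (hb : 1 < b) {t : ℝ} (ht : t ∈ Set.Ioo (-Real.pi) Real.pi) :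
    (wI b t).arg ≠ Real.pi := (Complex.mem_slitPlane_iff_arg.mp (wI_slit hb ht)).1

lemma hasDerivAt_wI (b t : ℝ) :
    HasDerivAt (wI b) ((b : ℂ) * Complex.exp (t * Complex.I) * Complex.I) t := by
  have h1 : HasDerivAt (fun s : ℝ => (s : ℂ) * Complex.I) Complex.I t := by
    simpa using ((hasDerivAt_id t).ofReal_comp.mul_const Complex.I)
  have h2 := h1.cexp
  have h3 := (h2.const_mul (b : ℂ)).const_add 1
  unfold wI
  refine h3.congr_deriv ?_
  ring


lemma quot_im {b : ℝ} (hb : 1 < b) (t : ℝ) :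
    (((b:ℂ) * Complex.exp (t * Complex.I) * Complex.I) / wI b t).im
      = (b * Real.cos t + b ^ 2) / (b ^ 2 + 2 * b * Real.cos t + 1) := by
  have hz1 : ((b:ℂ) * Complex.exp (t * Complex.I) * Complex.I).im = b * Real.cos t := by
    simp [Complex.mul_re, Complex.mul_im, Complex.exp_ofReal_mul_I_re,
      Complex.exp_ofReal_mul_I_im]
  have hz2 : ((b:ℂ) * Complex.exp (t * Complex.I) * Complex.I).re = -(b * Real.sin t) := by
    simp [Complex.mul_re, Complex.mul_im, Complex.exp_ofReal_mul_I_re,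
      Complex.exp_ofReal_mul_I_im]
  have hN := (NI_pos hb t).ne'
  rw [Complex.div_im, hz1, hz2, wI_normSq, wI_re, wI_im]
  rw [← sub_div, div_left_inj' hN]
  linear_combination b ^ 2 * Real.sin_sq_add_cos_sq t

lemma hasDerivAt_gI {b : ℝ} (hb : 1 < b) {t : ℝ} (ht : t ∈ Set.Ioo (-Real.pi) Real.pi) :
    HasDerivAt (gI b) ((1 - b ^ 2) / (b ^ 2 + 2 * b * Real.cos t + 1)) t := by
  have h4 := (hasDerivAt_wI b t).clog_real (wI_slit hb ht)
  have h5 : HasDerivAt (fun s => (Complex.log (wI b s)).im)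
      ((((b:ℂ) * Complex.exp (t * Complex.I) * Complex.I) / wI b t).im) t :=
    (Complex.imCLM.hasFDerivAt.comp_hasDerivAt t h4)
  have h6 := (hasDerivAt_id t).sub (h5.const_mul 2)
  have hN := (NI_pos hb t).ne'
  refine h6.congr_deriv ?_
  rw [quot_im hb, eq_div_iff hN, sub_mul,
    mul_assoc (2:ℝ) ((b * Real.cos t + b ^ 2) / (b ^ 2 + 2 * b * Real.cos t + 1)),
    div_mul_cancel₀ _ hN]
  ring

lemma hasDerivAt_GI (d : ℕ) {b : ℝ} (hb : 1 < b) {t : ℝ}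
    (ht : t ∈ Set.Ioo (-Real.pi) Real.pi) :
    HasDerivAt (GI d b) (1 + d * ((1 - b ^ 2) / (b ^ 2 + 2 * b * Real.cos t + 1))) t := by
  have := (hasDerivAt_id t).add ((hasDerivAt_gI hb ht).const_mul (d : ℝ))
  exact this


lemma fIsing_circle (d : ℕ) {b : ℝ} (hb : 1 < b) (θ t : ℝ) :
    fIsing d (Complex.exp (θ * Complex.I)) (b : ℂ) (Complex.exp (t * Complex.I))
      = Complex.exp ((↑(θ + d * gI b t)) * Complex.I) := by
  have hw := wI_ne hb t
  have hconj : (starRingEnd ℂ) (wI b t) = Complex.exp (-(2 * ((Complex.log (wI b t)).im : ℂ)) * Complex.I) * wI b t := by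
    have e1 : (starRingEnd ℂ) (wI b t) = Complex.exp ((starRingEnd ℂ) (Complex.log (wI b t))) := by
      rw [Complex.exp_conj, Complex.exp_log hw]
    have e3 : (starRingEnd ℂ) (Complex.log (wI b t)) =
        -(2 * ((Complex.log (wI b t)).im : ℂ)) * Complex.I + Complex.log (wI b t) := by
      apply Complex.ext <;> simp <;> ring
    rw [e1, e3, Complex.exp_add, Complex.exp_log hw]
  have hnum : Complex.exp (t * Complex.I) + (b : ℂ)
      = Complex.exp (t * Complex.I) * (starRingEnd ℂ) (wI b t) := by
    have hc : (starRingEnd ℂ) (wI b t) = 1 + (b : ℂ) * Complex.exp (-(t * Complex.I)) := by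
      simp [wI, map_add, map_mul, Complex.conj_ofReal, ← Complex.exp_conj]
    rw [hc, mul_add, mul_one, ← mul_assoc, mul_comm (Complex.exp (t * Complex.I)) ((b:ℂ)),
      mul_assoc, ← Complex.exp_add]
    simp
  have hden : (b : ℂ) * Complex.exp (t * Complex.I) + 1 = wI b t := by
    rw [wI]; ring
  have hratio : (Complex.exp (t * Complex.I) + (b : ℂ)) / ((b : ℂ) * Complex.exp (t * Complex.I) + 1)
      = Complex.exp ((↑(gI b t)) * Complex.I) := by
    rw [hnum, hden, hconj]
    have e4 : Complex.exp (↑t * Complex.I) *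
        (Complex.exp (-(2 * ((Complex.log (wI b t)).im : ℂ)) * Complex.I) * wI b t) / wI b t
        = Complex.exp (↑t * Complex.I) *
          Complex.exp (-(2 * ((Complex.log (wI b t)).im : ℂ)) * Complex.I) := by
      field_simp
    rw [e4, ← Complex.exp_add]
    congr 1
    push_cast [gI]
    ring
  rw [fIsing, hratio, ← Complex.exp_nat_mul, ← Complex.exp_add]
  congr 1
  push_cast
  ring

lemma wI_neg (b t : ℝ) : wI b (-t) = (starRingEnd ℂ) (wI b t) := by
  simp [wI, map_add, map_mul, Complex.conj_ofReal, ← Complex.exp_conj]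

lemma gI_neg {b : ℝ} (hb : 1 < b) {t : ℝ} (ht : t ∈ Set.Ioo (-Real.pi) Real.pi) :
    gI b (-t) = - gI b t := by
  unfold gI
  rw [wI_neg, Complex.log_conj _ (wI_arg_ne hb ht)]
  simp
  ring

lemma gI_zero {b : ℝ} (hb : 1 < b) : gI b 0 = 0 := by
  unfold gI
  have : wI b 0 = ((1 + b : ℝ) : ℂ) := by norm_num [wI]
  rw [this, Complex.log_im, Complex.arg_ofReal_of_nonneg (by linarith)]
  ring

lemma GI_zero (d : ℕ) {b : ℝ} (hb : 1 < b) : GI d b 0 = 0 := by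
  simp [GI, gI_zero hb]

open Real Filter in
lemma exists_GI_neg (d : ℕ) (hd : 2 ≤ d) {b : ℝ} (hb : 1 < b) :
    ∃ c ∈ Set.Ioo 0 Real.pi, GI d b c < 0 := by
  have hπ : (0:ℝ) < π := Real.pi_pos
  have hwcont : Continuous (wI b) := by unfold wI; fun_prop
  have hwval : wI b π = ((1 - b : ℝ) : ℂ) := by
    rw [wI]; push_cast; rw [Complex.exp_pi_mul_I]; ring
  have hmaps : Set.MapsTo (wI b) (Set.Ioo 0 π) {z : ℂ | 0 ≤ z.im} := by
    intro t ht
    rw [Set.mem_setOf_eq, wI_im]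
    exact mul_nonneg (by linarith) (Real.sin_nonneg_of_nonneg_of_le_pi ht.1.le ht.2.le)
  have hlog : ContinuousWithinAt Complex.log {z : ℂ | 0 ≤ z.im} (wI b π) := by
    rw [hwval]
    exact Complex.continuousWithinAt_log_of_re_neg_of_im_zero (by simp; linarith) (by simp)
  have hcomp : ContinuousWithinAt (fun t => Complex.log (wI b t)) (Set.Ioo 0 π) π :=
    hlog.comp hwcont.continuousWithinAt hmaps
  have h1 : Tendsto (fun t : ℝ => (Complex.log (wI b t)).im) (nhdsWithin π (Set.Ioo 0 π))
      (nhds π) := by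
    have h2 := Complex.continuous_im.continuousAt.comp_continuousWithinAt hcomp
    have h3 : (Complex.log (wI b π)).im = π := by
      rw [hwval, Complex.log_im, Complex.arg_ofReal_of_neg (by linarith)]
    simpa [ContinuousWithinAt, Function.comp_def, h3] using h2
  have htid : Tendsto (fun t : ℝ => t) (nhdsWithin π (Set.Ioo 0 π)) (nhds π) :=
    tendsto_id.mono_left nhdsWithin_le_nhds
  have htend : Tendsto (GI d b) (nhdsWithin π (Set.Ioo 0 π))
      (nhds (π + d * (π - 2 * π))) :=
    htid.add (((htid.sub (h1.const_mul 2)).const_mul (d:ℝ)))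
  have hval : π + (d:ℝ) * (π - 2 * π) < 0 := by
    have : (2:ℝ) ≤ d := by exact_mod_cast hd
    nlinarith
  have hne : (nhdsWithin π (Set.Ioo 0 π)).NeBot := by
    rw [← mem_closure_iff_nhdsWithin_neBot, closure_Ioo hπ.ne]
    exact ⟨hπ.le, le_refl π⟩
  have hev := htend.eventually_lt_const hval
  obtain ⟨c, hcneg, hc⟩ := (hev.and self_mem_nhdsWithin).exists
  exact ⟨c, hc, hcneg⟩

open Real Filter in
lemma exists_GI_pos (d : ℕ) (hd : 2 ≤ d) {b : ℝ} (hb : 1 < b)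
    (hb₂ : b < ((d : ℝ) + 1) / ((d : ℝ) - 1)) {c : ℝ} (hc : 0 < c) :
    ∃ t ∈ Set.Ioo 0 c, 0 < GI d b t := by
  have hd2 : (2:ℝ) ≤ d := by exact_mod_cast hd
  have hbd : b * ((d:ℝ) - 1) < (d:ℝ) + 1 := by
    rw [lt_div_iff₀ (by linarith)] at hb₂; linarith
  have hpos : 0 < 1 + (d:ℝ) * ((1 - b ^ 2) / (b ^ 2 + 2 * b * Real.cos 0 + 1)) := by
    have h1 : (1 - b ^ 2) / (b ^ 2 + 2 * b * Real.cos 0 + 1) = (1 - b) / (1 + b) := by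
      rw [Real.cos_zero, div_eq_div_iff (by nlinarith) (by linarith)]; ring
    have h2 : 1 + (d:ℝ) * ((1 - b) / (1 + b)) = ((1 + b) + d * (1 - b)) / (1 + b) := by
      field_simp
    rw [h1, h2]
    exact div_pos (by nlinarith) (by linarith)
  have hder := hasDerivAt_GI d hb (show (0:ℝ) ∈ Set.Ioo (-π) π by
    constructor <;> [linarith [Real.pi_pos]; exact Real.pi_pos])
  rw [hasDerivAt_iff_tendsto_slope] at hder
  have hev : ∀ᶠ y in nhdsWithin 0 {(0:ℝ)}ᶜ, 0 < slope (GI d b) 0 y :=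
    hder.eventually_const_lt hpos
  have hmono : nhdsWithin (0:ℝ) (Set.Ioi 0) ≤ nhdsWithin 0 {(0:ℝ)}ᶜ :=
    nhdsWithin_mono 0 (fun y hy => ne_of_gt hy)
  have hev2 : ∀ᶠ y in nhdsWithin (0:ℝ) (Set.Ioi 0), 0 < slope (GI d b) 0 y :=
    hev.filter_mono hmono
  have hmem : Set.Ioo (0:ℝ) c ∈ nhdsWithin (0:ℝ) (Set.Ioi 0) :=
    Ioo_mem_nhdsGT hc
  obtain ⟨t, hslope, ht⟩ := (hev2.and (Filter.eventually_mem_set.2 hmem)).exists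
  refine ⟨t, ht, ?_⟩
  rw [slope_def_field, GI_zero d hb, sub_zero, sub_zero] at hslope
  have := mul_pos hslope ht.1
  rwa [div_mul_cancel₀ _ (ne_of_gt ht.1)] at this

open Real in
lemma gI_strictAntiOn {b : ℝ} (hb : 1 < b) : StrictAntiOn (gI b) (Set.Ioo (-π) π) := by
  apply strictAntiOn_of_deriv_neg (convex_Ioo _ _)
  · intro x hx
    exact (hasDerivAt_gI hb hx).continuousAt.continuousWithinAt
  · intro x hx
    rw [interior_Ioo] at hx
    rw [(hasDerivAt_gI hb hx).deriv]
    exact div_neg_of_neg_of_pos (by nlinarith) (NI_pos hb x)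

open Real in
lemma GI_strictConcaveOn (d : ℕ) (hd : 2 ≤ d) {b : ℝ} (hb : 1 < b) :
    StrictConcaveOn ℝ (Set.Ico 0 π) (GI d b) := by
  apply StrictAntiOn.strictConcaveOn_of_deriv (convex_Ico _ _)
  · intro x hx
    have hx' : x ∈ Set.Ioo (-π) π := ⟨by linarith [hx.1, Real.pi_pos], hx.2⟩
    exact (hasDerivAt_GI d hb hx').continuousAt.continuousWithinAt
  · rw [interior_Ico]
    intro x hx y hy hxy
    have hx' : x ∈ Set.Ioo (-π) π := ⟨by linarith [hx.1, Real.pi_pos], hx.2⟩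
    have hy' : y ∈ Set.Ioo (-π) π := ⟨by linarith [hy.1, Real.pi_pos], hy.2⟩
    rw [(hasDerivAt_GI d hb hx').deriv, (hasDerivAt_GI d hb hy').deriv]
    have hcos : Real.cos y < Real.cos x :=
      Real.strictAntiOn_cos ⟨hx.1.le, hx.2.le⟩ ⟨hy.1.le, hy.2.le⟩ hxy
    have hNx := NI_pos hb x
    have hNy := NI_pos hb y
    have hdpos : (0:ℝ) < d := by
      have : (2:ℝ) ≤ d := by exact_mod_cast hd
      linarith
    have hdiv : (1 - b ^ 2) / (b ^ 2 + 2 * b * Real.cos y + 1)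
        < (1 - b ^ 2) / (b ^ 2 + 2 * b * Real.cos x + 1) := by
      rw [div_lt_div_iff₀ hNy hNx]
      nlinarith [mul_pos (mul_pos (show (0:ℝ) < 2*b by linarith) (sub_pos.2 hcos))
        (show (0:ℝ) < b^2 - 1 by nlinarith)]
    linarith [mul_lt_mul_of_pos_left hdiv hdpos]


end IsingAux

open Real in
/-- Theorem 3.2(i): for `b ∈ (1, (d+1)/(d-1))` there is `α_b ∈ (0,π)`, the smallest
solution of `e^{iα}·((e^{iα}+b)/(be^{iα}+1))^d = 1` in `(0,π)`, such that for every
`θ ∈ (-α_b, α_b)` and `ξ = e^{iθ}` the shortest closed arc with boundary points `1` and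
`ξ` is forward invariant under `f_{ξ,b}`; in particular the orbit of `ξ` avoids `-1`. -/
theorem fIsing_antiferro_invariant_arc (d : ℕ) (hd : 2 ≤ d) (b : ℝ)
    (hb₁ : 1 < b) (hb₂ : b < ((d : ℝ) + 1) / ((d : ℝ) - 1)) :
    ∃ αb : ℝ, αb ∈ Set.Ioo 0 Real.pi ∧
      fIsing d (Complex.exp (αb * Complex.I)) (b : ℂ) (Complex.exp (αb * Complex.I)) = 1 ∧
      (∀ α ∈ Set.Ioo 0 Real.pi,
        fIsing d (Complex.exp (α * Complex.I)) (b : ℂ) (Complex.exp (α * Complex.I)) = 1 →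
        αb ≤ α) ∧
      ∀ θ : ℝ, -αb < θ → θ < αb →
        Set.MapsTo (fIsing d (Complex.exp (θ * Complex.I)) (b : ℂ))
          (circArc θ) (circArc θ) ∧
        ∀ n : ℕ, (fIsing d (Complex.exp (θ * Complex.I)) (b : ℂ))^[n]
          (Complex.exp (θ * Complex.I)) ≠ -1 := by
  have hπ := Real.pi_pos
  have hdpos : (0:ℝ) < d := by
    have : (2:ℝ) ≤ d := by exact_mod_cast hd
    linarith
  obtain ⟨c, hc, hcneg⟩ := exists_GI_neg d hd hb₁
  obtain ⟨t0, ht0, ht0pos⟩ := exists_GI_pos d hd hb₁ hb₂ hc.1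
  have hcontIcc : ContinuousOn (GI d b) (Set.Icc t0 c) := by
    intro x hx
    have : x ∈ Set.Ioo (-π) π :=
      ⟨by linarith [hx.1, ht0.1], lt_of_le_of_lt hx.2 hc.2⟩
    exact (hasDerivAt_GI d hb₁ this).continuousAt.continuousWithinAt
  have h0mem : (0:ℝ) ∈ Set.Icc (GI d b c) (GI d b t0) := ⟨hcneg.le, ht0pos.le⟩
  obtain ⟨αb, hαIcc, hGαb⟩ := intermediate_value_Icc' ht0.2.le hcontIcc h0mem
  have hαb : αb ∈ Set.Ioo 0 π :=
    ⟨lt_of_lt_of_le ht0.1 hαIcc.1, lt_of_le_of_lt hαIcc.2 hc.2⟩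
  -- positivity of G on (0, αb)
  have hGpos : ∀ s ∈ Set.Ioo 0 αb, 0 < GI d b s := by
    intro s hs
    have hconc := GI_strictConcaveOn d hd hb₁
    have hαne : αb ≠ 0 := ne_of_gt hαb.1
    have key := hconc.2 (show (0:ℝ) ∈ Set.Ico 0 π from ⟨le_refl 0, hπ⟩)
      (show αb ∈ Set.Ico 0 π from ⟨hαb.1.le, hαb.2⟩) (Ne.symm hαne)
      (show 0 < 1 - s/αb by
        rw [sub_pos, div_lt_one hαb.1]; exact hs.2)
      (show 0 < s/αb from div_pos hs.1 hαb.1) (by ring)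
    have e1 : (1 - s/αb) • (0:ℝ) + (s/αb) • αb = s := by
      rw [smul_eq_mul, smul_eq_mul, mul_zero, zero_add, div_mul_cancel₀ _ hαne]
    have e2 : (1 - s/αb) • GI d b 0 + (s/αb) • GI d b αb = 0 := by
      rw [GI_zero d hb₁, hGαb, smul_zero, smul_zero, add_zero]
    rw [e1, e2] at key
    exact key
  -- the defining equation at αb
  have heq : fIsing d (Complex.exp (αb * Complex.I)) (b : ℂ)
      (Complex.exp (αb * Complex.I)) = 1 := by
    rw [show ((αb:ℝ):ℂ) * Complex.I = ((αb:ℝ):ℂ) * Complex.I from rfl]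
    rw [fIsing_circle d hb₁ αb αb]
    rw [show αb + (d:ℝ) * gI b αb = (0:ℝ) from hGαb]
    simp
  -- gI is negative on (0, π)
  have hgneg : ∀ s ∈ Set.Ioo 0 π, gI b s < 0 := by
    intro s hs
    have := gI_strictAntiOn hb₁ (show (0:ℝ) ∈ Set.Ioo (-π) π from ⟨by linarith, hπ⟩)
      (show s ∈ Set.Ioo (-π) π from ⟨by linarith [hs.1], hs.2⟩) hs.1
    rwa [gI_zero hb₁] at this
  -- minimality
  have hmin : ∀ α ∈ Set.Ioo 0 π,
      fIsing d (Complex.exp (α * Complex.I)) (b : ℂ) (Complex.exp (α * Complex.I)) = 1 →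
      αb ≤ α := by
    intro α hα hfα
    by_contra hlt
    push_neg at hlt
    have hGα : 0 < GI d b α := hGpos α ⟨hα.1, hlt⟩
    have hGα2 : GI d b α < 2 * π := by
      have h1 : gI b α < 0 := hgneg α hα
      have : (d:ℝ) * gI b α < 0 := mul_neg_of_pos_of_neg hdpos h1
      have hGdef : GI d b α = α + d * gI b α := rfl
      linarith [hα.2]
    rw [fIsing_circle d hb₁ α α, Complex.exp_eq_one_iff] at hfα
    obtain ⟨n, hn⟩ := hfα
    have h' : ((α + (d:ℝ) * gI b α : ℝ) : ℂ) = (((n:ℝ) * (2*π) : ℝ) : ℂ) := by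
      apply mul_right_cancel₀ Complex.I_ne_zero
      push_cast
      push_cast at hn
      linear_combination hn
    have h'' : (α + (d:ℝ) * gI b α : ℝ) = (n:ℝ) * (2*π) := by exact_mod_cast h'
    have hGdef : GI d b α = α + d * gI b α := rfl
    rw [hGdef, h''] at hGα hGα2
    have hn0 : (0:ℤ) < n := by
      by_contra hn0
      push_neg at hn0
      have : (n:ℝ) ≤ 0 := by exact_mod_cast hn0
      nlinarith
    have hn1 : (1:ℝ) ≤ (n:ℝ) := by exact_mod_cast hn0
    nlinarith
  refine ⟨αb, hαb, heq, hmin, ?_⟩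
  intro θ hθ1 hθ2
  -- the arc bound
  have harc : ∀ s, 0 ≤ s → s < αb → ∀ t ∈ Set.Icc 0 s,
      (s + d * gI b t) ∈ Set.Icc 0 s := by
    intro s hs0 hsα t ht
    have hsπ : s < π := lt_trans hsα hαb.2
    have htI : t ∈ Set.Ioo (-π) π := ⟨by linarith [ht.1], by linarith [ht.2]⟩
    have hsI : s ∈ Set.Ioo (-π) π := ⟨by linarith, hsπ⟩
    have h0I : (0:ℝ) ∈ Set.Ioo (-π) π := ⟨by linarith, hπ⟩
    have hg_le : gI b t ≤ gI b 0 := (gI_strictAntiOn hb₁).antitoneOn h0I htI ht.1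
    have hg_ge : gI b s ≤ gI b t := (gI_strictAntiOn hb₁).antitoneOn htI hsI ht.2
    have hGs : 0 ≤ GI d b s := by
      rcases eq_or_lt_of_le hs0 with h | h
      · rw [← h]; rw [GI_zero d hb₁]
      · exact (hGpos s ⟨h, hsα⟩).le
    have hGsdef : GI d b s = s + d * gI b s := rfl
    constructor
    · have : (d:ℝ) * gI b s ≤ d * gI b t :=
        mul_le_mul_of_nonneg_left hg_ge hdpos.le
      linarith
    · have hgt0 : gI b t ≤ 0 := by rwa [gI_zero hb₁] at hg_le
      have : (d:ℝ) * gI b t ≤ 0 := mul_nonpos_of_nonneg_of_nonpos hdpos.le hgt0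
      linarith
  have hmt : Set.MapsTo (fIsing d (Complex.exp (θ * Complex.I)) (b : ℂ))
      (circArc θ) (circArc θ) := by
    intro R hR
    obtain ⟨t, ht, rfl⟩ := hR
    rw [fIsing_circle d hb₁ θ t]
    refine ⟨θ + d * gI b t, ?_, rfl⟩
    rcases le_or_gt 0 θ with h | h
    · rw [Set.uIcc_of_le h] at ht ⊢
      exact harc θ h hθ2 t ht
    · rw [Set.uIcc_of_ge h.le] at ht ⊢
      have hu : -t ∈ Set.Icc 0 (-θ) := ⟨by linarith [ht.2], by linarith [ht.1]⟩
      have h2 := harc (-θ) (by linarith) (by linarith) (-t) hu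
      have htI : -t ∈ Set.Ioo (-π) π :=
        ⟨by linarith [hu.1], by linarith [hu.2, hαb.2]⟩
      have hodd : gI b t = - gI b (-t) := by
        rw [← gI_neg hb₁ htI, neg_neg]
      rw [Set.mem_Icc] at h2 ⊢
      rw [hodd]
      constructor <;> linarith [h2.1, h2.2]
  refine ⟨hmt, ?_⟩
  have hmem : ∀ n : ℕ, (fIsing d (Complex.exp (θ * Complex.I)) (b : ℂ))^[n]
      (Complex.exp (θ * Complex.I)) ∈ circArc θ := by
    intro n
    induction n with
    | zero => exact ⟨θ, Set.right_mem_uIcc, rfl⟩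
    | succ n ih => rw [Function.iterate_succ_apply']; exact hmt ih
  intro n hneg
  have h1 := hmem n
  rw [hneg] at h1
  obtain ⟨t, ht, hexp⟩ := h1
  have hcos : Real.cos t = -1 := by
    have := congrArg Complex.re hexp
    simpa [Complex.exp_ofReal_mul_I_re] using this
  have htb : -π < t ∧ t < π := by
    rcases Set.mem_uIcc.1 ht with h | h
    · exact ⟨by linarith [h.1], by linarith [h.2, hαb.2]⟩
    · exact ⟨by linarith [h.1, hαb.2], by linarith [h.2]⟩
  have hhalf : 0 < Real.cos (t/2) :=
    Real.cos_pos_of_mem_Ioo ⟨by linarith [htb.1], by linarith [htb.2]⟩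
  have hsq := Real.cos_sq (t/2)
  rw [show 2 * (t/2) = t by ring] at hsq
  nlinarith
end
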